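/- For every positive integer h, the subsequence {C_{2hr}} of the Hardy–Littlewood constants has a mean value: (1/m) · ∑_{r=1}^{m} C_{2hr} → ∏_{p ∣ h, p > 2} p/(p−1) as m → ∞, where the product runs over the odd primes dividing h. -/

import Mathlib

open Filter Topology

/-- The twin prime constant `C₂ = ∏_{p > 2 prime} (1 - 1/(p-1)²)`. -/
noncomputable def twinPrimeConst : ℝ :=
  ∏' p : {p : ℕ // p.Prime ∧ 2 < p}, (1 - 1 / ((p : ℕ) - 1 : ℝ) ^ 2)

/-- The Hardy–Littlewood constant `C_{2r} = C₂ ∏_{p ∣ r, p > 2} (p-1)/(p-2)`. -/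
noncomputable def HLconst (r : ℕ) : ℝ :=
  twinPrimeConst *
    ∏ p ∈ r.primeFactors.filter (fun p => 2 < p), (((p : ℝ) - 1) / ((p : ℝ) - 2))

namespace HLaux

open Finset

open scoped Classical

/-- weight of a divisor: `∏_{p ∣ d} 1/(p-2)` on odd squarefree `d`, else 0. -/
noncomputable def w (d : ℕ) : ℝ :=
  if Squarefree d ∧ Odd d then ∏ p ∈ d.primeFactors, (1 / ((p : ℝ) - 2)) else 0

/-- `d / gcd(d, h)`. -/
def DD (h d : ℕ) : ℕ := d / d.gcd h

noncomputable def Fw (h d : ℕ) : ℝ := w d / (DD h d : ℝ)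

lemma w_zero : w 0 = 0 := by simp [w, not_squarefree_zero]

lemma w_one : w 1 = 1 := by simp [w, odd_one]

lemma sqf_of_w_ne {d : ℕ} (hd : w d ≠ 0) : Squarefree d ∧ Odd d := by
  by_contra hcon; exact hd (if_neg hcon)

lemma three_le_of_mem {d p : ℕ} (hd : Odd d) (hp : p ∈ d.primeFactors) : 3 ≤ p := by
  have hpp := Nat.prime_of_mem_primeFactors hp
  have h2 := hpp.two_le
  rcases Nat.lt_or_ge p 3 with hlt | hge
  · interval_cases p
    · exact absurd (Nat.not_odd_iff_even.mpr (even_iff_two_dvd.mpr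
        (Nat.dvd_of_mem_primeFactors hp))) (fun H => H hd)
  · exact hge

lemma w_nonneg (d : ℕ) : 0 ≤ w d := by
  unfold w
  split
  · rename_i hd
    refine Finset.prod_nonneg fun p hp => ?_
    have h3 : 3 ≤ p := three_le_of_mem hd.2 hp
    have h3' : (3:ℝ) ≤ (p:ℝ) := by exact_mod_cast h3
    have : (0:ℝ) < (p:ℝ) - 2 := by linarith
    positivity
  · exact le_refl 0

lemma w_mul {a b : ℕ} (hab : a.Coprime b) : w (a * b) = w a * w b := by
  rcases eq_or_ne a 0 with rfl | ha
  · simp [w_zero]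
  rcases eq_or_ne b 0 with rfl | hb
  · simp [w_zero]
  by_cases H : Squarefree (a * b) ∧ Odd (a * b)
  · have h1 : Squarefree a ∧ Odd a :=
      ⟨((Nat.squarefree_mul hab).mp H.1).1, (Nat.odd_mul.mp H.2).1⟩
    have h2 : Squarefree b ∧ Odd b :=
      ⟨((Nat.squarefree_mul hab).mp H.1).2, (Nat.odd_mul.mp H.2).2⟩
    rw [w, w, w, if_pos H, if_pos h1, if_pos h2, Nat.primeFactors_mul ha hb,
      Finset.prod_union hab.disjoint_primeFactors]
  · rw [w, if_neg H]
    by_cases h1 : Squarefree a ∧ Odd a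
    · by_cases h2 : Squarefree b ∧ Odd b
      · exact absurd ⟨(Nat.squarefree_mul hab).mpr ⟨h1.1, h2.1⟩, h1.2.mul h2.2⟩ H
      · rw [w, w, if_neg h2, mul_zero]
    · rw [w, if_neg h1, zero_mul]

lemma gcd_mul_DD (h d : ℕ) : d.gcd h * DD h d = d :=
  Nat.mul_div_cancel' (Nat.gcd_dvd_left d h)

lemma DD_pos {h d : ℕ} (hd : 0 < d) : 0 < DD h d := by
  rcases Nat.eq_zero_or_pos (DD h d) with h0 | h1
  · have := gcd_mul_DD h d
    rw [h0, mul_zero] at this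
    omega
  · exact h1

lemma DD_one (h : ℕ) : DD h 1 = 1 := by
  simp [DD, Nat.gcd_one_left]

lemma Fw_zero (h : ℕ) : Fw h 0 = 0 := by simp [Fw, w_zero]

lemma Fw_one (h : ℕ) : Fw h 1 = 1 := by simp [Fw, w_one, DD_one]

lemma Fw_nonneg (h d : ℕ) : 0 ≤ Fw h d :=
  div_nonneg (w_nonneg d) (Nat.cast_nonneg _)

lemma DD_mul (h : ℕ) {a b : ℕ} (hab : a.Coprime b) : DD h (a * b) = DD h a * DD h b := by
  unfold DD
  rw [Nat.gcd_comm (a*b) h, Nat.Coprime.gcd_mul h hab, Nat.gcd_comm h a, Nat.gcd_comm h b,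
    Nat.div_mul_div_comm (Nat.gcd_dvd_left a h) (Nat.gcd_dvd_left b h)]

lemma Fw_mul (h : ℕ) {a b : ℕ} (hab : a.Coprime b) : Fw h (a * b) = Fw h a * Fw h b := by
  unfold Fw
  rw [w_mul hab, DD_mul h hab, Nat.cast_mul, div_mul_div_comm]


lemma sqrt_prod (s : Finset ℕ) : Real.sqrt (∏ p ∈ s, (p:ℝ)) = ∏ p ∈ s, Real.sqrt (p:ℝ) := by
  induction s using Finset.cons_induction with
  | empty => simp
  | cons a s ha ih =>
      rw [Finset.prod_cons, Finset.prod_cons, Real.sqrt_mul (by positivity), ih]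

lemma sqrt_le_sub_two {p : ℕ} (hp : 5 ≤ p) : Real.sqrt p ≤ (p:ℝ) - 2 := by
  have h5 : (5:ℝ) ≤ (p:ℝ) := by exact_mod_cast hp
  nlinarith [Real.sq_sqrt (show (0:ℝ) ≤ (p:ℝ) by positivity), Real.sqrt_nonneg (p:ℝ),
    sq_nonneg (Real.sqrt (p:ℝ) - 2)]

lemma sqrt_three_le_two : Real.sqrt 3 ≤ 2 := by
  nlinarith [Real.sq_sqrt (show (0:ℝ) ≤ (3:ℝ) by norm_num), Real.sqrt_nonneg (3:ℝ)]

/-- key bound: `w d * √d ≤ 2`. -/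
lemma w_mul_sqrt_le (d : ℕ) : w d * Real.sqrt d ≤ 2 := by
  by_cases H : Squarefree d ∧ Odd d
  · have hd : (d:ℝ) = ∏ p ∈ d.primeFactors, (p:ℝ) := by
      rw [← Nat.cast_prod]
      exact_mod_cast (congrArg (Nat.cast (R := ℝ)) (Nat.prod_primeFactors_of_squarefree H.1)).symm
    rw [w, if_pos H, hd, sqrt_prod, ← Finset.prod_mul_distrib]
    calc ∏ p ∈ d.primeFactors, (1 / ((p:ℝ) - 2) * Real.sqrt (p:ℝ))
        ≤ ∏ p ∈ d.primeFactors, (if p = 3 then 2 else 1) := by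
          refine Finset.prod_le_prod (fun p hp => ?_) (fun p hp => ?_)
          · have h3 : 3 ≤ p := three_le_of_mem H.2 hp
            have h3' : (3:ℝ) ≤ (p:ℝ) := by exact_mod_cast h3
            have h0 : (0:ℝ) < (p:ℝ) - 2 := by linarith
            positivity
          · have h3 : 3 ≤ p := three_le_of_mem H.2 hp
            have hpp := Nat.prime_of_mem_primeFactors hp
            by_cases hp3 : p = 3
            · subst hp3
              rw [if_pos rfl]
              norm_num
              nlinarith [Real.sq_sqrt (show (0:ℝ) ≤ (3:ℝ) by norm_num), Real.sqrt_nonneg (3:ℝ)]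
            · rw [if_neg hp3]
              have hodd : Odd p := hpp.odd_of_ne_two (by omega)
              have h5 : 5 ≤ p := by
                rw [Nat.odd_iff] at hodd
                omega
              have h5' : (5:ℝ) ≤ (p:ℝ) := by exact_mod_cast h5
              have h0 : (0:ℝ) < (p:ℝ) - 2 := by linarith
              rw [one_div, inv_mul_le_iff₀ h0, mul_one]
              exact sqrt_le_sub_two h5
    _ ≤ 2 := by
          rw [Finset.prod_ite_eq' d.primeFactors 3 (fun _ => (2:ℝ))]
          split <;> norm_num
  · rw [w, if_neg H, zero_mul]
    norm_num

lemma rpow_32 {d : ℕ} (hd : 0 < d) : (d:ℝ) ^ ((3:ℝ)/2) = (d:ℝ) * Real.sqrt d := by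
  have h0 : (0:ℝ) < (d:ℝ) := by exact_mod_cast hd
  rw [show (3:ℝ)/2 = 1 + 1/2 by norm_num, Real.rpow_add h0, Real.rpow_one,
    Real.sqrt_eq_rpow]

lemma Fw_le (h : ℕ) (hh : 0 < h) (d : ℕ) :
    Fw h d ≤ 2 * h * (1 / (d:ℝ) ^ ((3:ℝ)/2)) := by
  rcases Nat.eq_zero_or_pos d with rfl | hd
  · rw [Fw_zero]
    rw [Nat.cast_zero, Real.zero_rpow (by norm_num)]
    norm_num
  have hDD := DD_pos (h := h) hd
  have hDD' : (0:ℝ) < (DD h d : ℝ) := by exact_mod_cast hDD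
  have hd' : (0:ℝ) < (d:ℝ) := by exact_mod_cast hd
  have hs : (0:ℝ) < Real.sqrt d := Real.sqrt_pos.mpr hd'
  have hgd : (d:ℝ) ≤ h * (DD h d : ℝ) := by
    have h1 : d.gcd h ≤ h := Nat.gcd_le_right (n := h) d hh
    have := gcd_mul_DD h d
    have h2 : d ≤ h * DD h d := by
      calc d = d.gcd h * DD h d := this.symm
      _ ≤ h * DD h d := Nat.mul_le_mul_right _ h1
    exact_mod_cast h2
  rw [rpow_32 hd]
  have hw := w_nonneg d
  have hwd := w_mul_sqrt_le d
  -- Fw h d = w d / DD ≤ 2 h / (d * sqrt d)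
  have key : w d * ((d:ℝ) * Real.sqrt d) ≤ 2 * h * (DD h d : ℝ) := by
    have e1 : w d * ((d:ℝ) * Real.sqrt d) = (w d * Real.sqrt d) * d := by ring
    have e2 : (w d * Real.sqrt d) * d ≤ 2 * d :=
      mul_le_mul_of_nonneg_right hwd hd'.le
    have e3 : (2:ℝ) * d ≤ 2 * (h * DD h d) := by linarith
    rw [e1]; linarith
  rw [Fw, div_le_iff₀ hDD', mul_one_div, div_mul_eq_mul_div, le_div_iff₀ (mul_pos hd' hs)]
  linarith [key]

lemma summable_Fw (h : ℕ) (hh : 0 < h) : Summable (Fw h) := by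
  refine Summable.of_nonneg_of_le (Fw_nonneg h) (Fw_le h hh) ?_
  exact (Real.summable_one_div_nat_rpow.mpr (by norm_num)).mul_left _


lemma Fw_prime_pow (h : ℕ) {p : ℕ} (hp : p.Prime) {e : ℕ} (he : 2 ≤ e) : Fw h (p ^ e) = 0 := by
  have hnsq : ¬ Squarefree (p ^ e) := by
    intro H
    have hdvd : p * p ∣ p ^ e := by
      calc p * p = p ^ 2 := (sq p).symm
      _ ∣ p ^ e := pow_dvd_pow p he
    exact (Nat.squarefree_iff_prime_squarefree.mp H p hp) hdvd
  rw [Fw, w, if_neg (fun Hc => hnsq Hc.1), zero_div]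

lemma tsum_Fw_pow (h : ℕ) (p : Nat.Primes) :
    ∑' e : ℕ, Fw h ((p:ℕ) ^ e) = 1 + Fw h (p:ℕ) := by
  rw [tsum_eq_sum (s := ({0, 1} : Finset ℕ)) ?_]
  · rw [Finset.sum_insert (by norm_num), Finset.sum_singleton, pow_zero, pow_one, Fw_one]
  · intro e he
    simp only [Finset.mem_insert, Finset.mem_singleton] at he
    exact Fw_prime_pow h p.2 (by omega)

lemma hasProd_primes (h : ℕ) (hh : 0 < h) :
    HasProd (fun p : Nat.Primes => 1 + Fw h (p:ℕ)) (∑' d, Fw h d) := by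
  have hnorm : Summable (fun d => ‖Fw h d‖) :=
    (summable_Fw h hh).congr fun d => (Real.norm_of_nonneg (Fw_nonneg h d)).symm
  have H := EulerProduct.eulerProduct_hasProd (f := Fw h) (Fw_one h)
    (fun {m n} hmn => Fw_mul h hmn) hnorm (Fw_zero h)
  simpa only [tsum_Fw_pow h] using H

abbrev OP := {p : ℕ // p.Prime ∧ 2 < p}

def emb (p : OP) : Nat.Primes := ⟨p.1, p.2.1⟩

lemma emb_inj : Function.Injective emb := by
  intro a b hab
  have : (emb a).val = (emb b).val := congrArg Subtype.val hab
  exact Subtype.ext this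

lemma w_two : w 2 = 0 := by
  rw [w, if_neg]
  rintro ⟨-, h2⟩
  rw [Nat.odd_iff] at h2
  omega

lemma hasProd_odd (h : ℕ) (hh : 0 < h) :
    HasProd (fun p : OP => 1 + Fw h (p:ℕ)) (∑' d, Fw h d) := by
  have hone : ∀ q : Nat.Primes, q ∉ Set.range emb → 1 + Fw h (q:ℕ) = 1 := by
    intro q hq
    have hq2 : (q:ℕ) = 2 := by
      by_contra hne
      have h2 : 2 < (q:ℕ) := lt_of_le_of_ne q.2.two_le (Ne.symm hne)
      exact hq ⟨⟨q.1, q.2, h2⟩, rfl⟩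
    rw [hq2, Fw, w_two, zero_div, add_zero]
  exact (emb_inj.hasProd_iff hone).mpr (hasProd_primes h hh)

lemma three_le_OP (p : OP) : (3:ℝ) ≤ ((p:ℕ):ℝ) := by
  have := p.2.2
  exact_mod_cast this

lemma twin_pos (p : OP) : (0:ℝ) < 1 - 1 / (((p:ℕ):ℝ) - 1) ^ 2 := by
  have hx := three_le_OP p
  have h1 : (0:ℝ) < (((p:ℕ):ℝ) - 1) ^ 2 := by nlinarith
  have h2 : 1 / (((p:ℕ):ℝ) - 1) ^ 2 ≤ 1/4 := by
    rw [div_le_div_iff₀ h1 (by norm_num)]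
    nlinarith
  linarith

lemma log_bound (p : OP) :
    ‖Real.log (1 - 1 / (((p:ℕ):ℝ) - 1) ^ 2)‖ ≤ 8 / ((p:ℕ):ℝ) ^ 2 := by
  set x : ℝ := ((p:ℕ):ℝ) with hxdef
  have hx : (3:ℝ) ≤ x := three_le_OP p
  have h1 : (0:ℝ) < (x - 1) ^ 2 := by nlinarith
  set c : ℝ := 1 - 1 / (x - 1) ^ 2 with hcdef
  have hc : 0 < c := twin_pos p
  have hc1 : c ≤ 1 := by
    have : 0 ≤ 1 / (x-1)^2 := by positivity
    simp only [hcdef]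
    linarith
  have key : c⁻¹ - 1 ≤ 8 / x ^ 2 := by
    have e : c⁻¹ - 1 = (1/(x-1)^2) / c := by
      rw [eq_div_iff hc.ne', sub_mul, inv_mul_cancel₀ hc.ne', hcdef]
      ring
    have e3 : c * (x-1)^2 = (x-1)^2 - 1 := by
      rw [hcdef, sub_mul, one_mul, one_div, inv_mul_cancel₀ h1.ne']
    rw [e, div_le_div_iff₀ hc (by positivity), div_mul_eq_mul_div, one_mul,
      div_le_iff₀ h1, mul_assoc, e3]
    nlinarith
  rw [Real.norm_eq_abs, abs_of_nonpos (Real.log_nonpos hc.le hc1), ← Real.log_inv]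
  exact le_trans (Real.log_le_sub_one_of_pos (by positivity)) key

lemma summable_log_twin :
    Summable (fun p : OP => Real.log (1 - 1 / (((p:ℕ):ℝ) - 1) ^ 2)) := by
  have h0 : Summable (fun n : ℕ => 8 / (n:ℝ)^2) := by
    have := (Real.summable_one_div_nat_pow (p := 2)).mpr one_lt_two
    simpa [div_eq_mul_inv] using this.mul_left 8
  exact Summable.of_norm_bounded (h0.subtype _) log_bound

lemma multipliable_twin : Multipliable (fun p : OP => 1 - 1 / (((p:ℕ):ℝ) - 1) ^ 2) :=
  Real.multipliable_of_summable_log (fun p => twin_pos p) summable_log_twin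


lemma w_prime {p : ℕ} (hp : p.Prime) (h2 : 2 < p) : w p = 1 / ((p:ℝ) - 2) := by
  rw [w, if_pos ⟨hp.squarefree, hp.odd_of_ne_two (by omega)⟩, hp.primeFactors,
    Finset.prod_singleton]

lemma Fw_prime (h : ℕ) {p : ℕ} (hp : p.Prime) (h2 : 2 < p) :
    Fw h p = if p ∣ h then 1 / ((p:ℝ) - 2) else 1 / ((p:ℝ) - 2) / p := by
  rw [Fw, w_prime hp h2, DD]
  by_cases hd : p ∣ h
  · rw [if_pos hd, Nat.gcd_eq_left hd, Nat.div_self hp.pos, Nat.cast_one, div_one]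
  · have hg : p.gcd h = 1 := hp.coprime_iff_not_dvd.mpr hd
    rw [if_neg hd, hg, Nat.div_one]

lemma key_prime (h : ℕ) (p : OP) :
    (1 - 1 / (((p:ℕ):ℝ) - 1) ^ 2) * (1 + Fw h (p:ℕ)) =
      if (p:ℕ) ∣ h then ((p:ℕ):ℝ) / (((p:ℕ):ℝ) - 1) else 1 := by
  have hx : (3:ℝ) ≤ ((p:ℕ):ℝ) := three_le_OP p
  set x : ℝ := ((p:ℕ):ℝ) with hxdef
  have hx0 : x ≠ 0 := by linarith
  have hx1 : x - 1 ≠ 0 := by intro hc; rw [sub_eq_zero] at hc; linarith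
  have hx2 : x - 2 ≠ 0 := by intro hc; rw [sub_eq_zero] at hc; linarith
  rw [Fw_prime h p.2.1 p.2.2]
  rw [← hxdef]
  by_cases hd : (p:ℕ) ∣ h
  · rw [if_pos hd, if_pos hd]
    field_simp
    ring
  · rw [if_neg hd, if_neg hd]
    field_simp
    ring

lemma CL (h : ℕ) (hh : 0 < h) :
    twinPrimeConst * (∑' d, Fw h d) =
      ∏ p ∈ h.primeFactors.filter (fun p => 2 < p), ((p:ℝ) / ((p:ℝ) - 1)) := by
  have hg : Multipliable (fun p : OP => 1 + Fw h (p:ℕ)) := (hasProd_odd h hh).multipliable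
  have hgt : ∏' p : OP, (1 + Fw h (p:ℕ)) = ∑' d, Fw h d := (hasProd_odd h hh).tprod_eq
  rw [twinPrimeConst, ← hgt, ← Multipliable.tprod_mul multipliable_twin hg]
  rw [tprod_congr (key_prime h)]
  rw [tprod_eq_prod
    (s := Finset.subtype (fun n => n.Prime ∧ 2 < n) h.primeFactors) (f := fun p : OP =>
      if (p:ℕ) ∣ h then ((p:ℕ):ℝ) / (((p:ℕ):ℝ) - 1) else 1) ?_]
  · rw [Finset.prod_subtype_eq_prod_filter
      (fun n : ℕ => if n ∣ h then (n:ℝ) / ((n:ℝ) - 1) else 1)]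
    have hfil : h.primeFactors.filter (fun n => n.Prime ∧ 2 < n) =
        h.primeFactors.filter (fun p => 2 < p) := by
      apply Finset.filter_congr
      intro x hx
      simp [Nat.prime_of_mem_primeFactors hx]
    rw [hfil]
    refine Finset.prod_congr rfl fun x hx => ?_
    rw [if_pos (Nat.dvd_of_mem_primeFactors (Finset.mem_of_mem_filter x hx))]
  · intro b hb
    rw [Finset.mem_subtype] at hb
    have hnd : ¬ (b:ℕ) ∣ h := fun hdvd => hb (Nat.mem_primeFactors.mpr ⟨b.2.1, hdvd, hh.ne'⟩)
    simp only [hnd, if_false]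


lemma squarefree_prod_primes {s : Finset ℕ} (hs : ∀ p ∈ s, p.Prime) :
    Squarefree (∏ p ∈ s, p) := by
  induction s using Finset.cons_induction with
  | empty => simpa using squarefree_one
  | cons a s ha ih =>
    rw [Finset.prod_cons]
    have hap : a.Prime := hs a (Finset.mem_cons_self a s)
    have hcop : a.Coprime (∏ p ∈ s, p) :=
      Nat.Coprime.prod_right fun p hp =>
        (Nat.coprime_primes hap (hs p (Finset.mem_cons_of_mem hp))).mpr
          (by rintro rfl; exact ha hp)
    exact (Nat.squarefree_mul hcop).mpr
      ⟨hap.squarefree, ih fun p hp => hs p (Finset.mem_cons_of_mem hp)⟩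

lemma odd_prod_iff {s : Finset ℕ} (hs : ∀ p ∈ s, p.Prime) :
    Odd (∏ p ∈ s, p) ↔ 2 ∉ s := by
  rw [← Nat.not_even_iff_odd, even_iff_two_dvd, Nat.prime_two.prime.dvd_finset_prod_iff]
  constructor
  · intro H h2
    exact H ⟨2, h2, dvd_rfl⟩
  · rintro h2 ⟨a, ha, hdvd⟩
    have : 2 = a := (Nat.prime_dvd_prime_iff_eq Nat.prime_two (hs a ha)).mp hdvd
    exact h2 (this ▸ ha)

lemma w_prod {n : ℕ} {t : Finset ℕ} (ht : t ⊆ n.primeFactors) :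
    w (∏ p ∈ t, p) = if 2 ∈ t then 0 else ∏ p ∈ t, (1 / ((p:ℝ) - 2)) := by
  have hprimes : ∀ p ∈ t, p.Prime := fun p hp =>
    Nat.prime_of_mem_primeFactors (ht hp)
  have hsq : Squarefree (∏ p ∈ t, p) := squarefree_prod_primes hprimes
  have hpf := Nat.primeFactors_prod hprimes
  by_cases h2 : 2 ∈ t
  · rw [if_pos h2, w, if_neg]
    rintro ⟨-, hodd⟩
    exact ((odd_prod_iff hprimes).mp hodd) h2
  · rw [if_neg h2, w, if_pos ⟨hsq, (odd_prod_iff hprimes).mpr h2⟩, hpf]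

lemma expand (n : ℕ) (hn : n ≠ 0) :
    ∏ p ∈ n.primeFactors.filter (fun p => 2 < p), (((p:ℝ) - 1) / ((p:ℝ) - 2)) =
      ∑ d ∈ n.divisors, w d := by
  have hval : ∀ i : Finset ℕ, i.val.prod = ∏ p ∈ i, p := by
    intro i
    rw [Finset.prod_eq_multiset_prod]
    simp
  rw [← Finset.sum_filter_of_ne (fun d _ hd => (sqf_of_w_ne hd).1),
    Nat.sum_divisors_filter_squarefree hn]
  have hidx : (UniqueFactorizationMonoid.normalizedFactors n).toFinset = n.primeFactors := by
    rw [Nat.factors_eq]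
    simp
  rw [hidx]
  calc ∏ p ∈ n.primeFactors.filter (fun p => 2 < p), (((p:ℝ) - 1) / ((p:ℝ) - 2))
      = ∏ p ∈ n.primeFactors.filter (fun p => 2 < p), (1 / ((p:ℝ) - 2) + 1) := by
        refine Finset.prod_congr rfl fun p hp => ?_
        have h2 : 2 < p := (Finset.mem_filter.mp hp).2
        have h2' : (2:ℝ) < (p:ℝ) := by exact_mod_cast h2
        have hne : (p:ℝ) - 2 ≠ 0 := by intro hc; rw [sub_eq_zero] at hc; linarith
        field_simp
        ring
    _ = ∑ t ∈ (n.primeFactors.filter (fun p => 2 < p)).powerset,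
          ∏ p ∈ t, (1 / ((p:ℝ) - 2)) := by
        rw [Finset.prod_add]
        refine Finset.sum_congr rfl fun t ht => ?_
        rw [Finset.prod_const_one, mul_one]
    _ = ∑ t ∈ (n.primeFactors.filter (fun p => 2 < p)).powerset,
          (if 2 ∈ t then 0 else ∏ p ∈ t, (1 / ((p:ℝ) - 2))) := by
        refine Finset.sum_congr rfl fun t ht => ?_
        rw [if_neg]
        intro h2
        have := (Finset.mem_filter.mp ((Finset.mem_powerset.mp ht) h2)).2
        omega
    _ = ∑ t ∈ n.primeFactors.powerset,
          (if 2 ∈ t then 0 else ∏ p ∈ t, (1 / ((p:ℝ) - 2))) := by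
        refine Finset.sum_subset
          (Finset.powerset_mono.mpr (Finset.filter_subset _ _)) fun t ht hnt => ?_
        rw [if_pos]
        rw [Finset.mem_powerset] at ht hnt
        obtain ⟨p, hpt, hpn⟩ := Finset.not_subset.mp hnt
        have hpp := Nat.prime_of_mem_primeFactors (ht hpt)
        have hn2 : ¬ 2 < p := by
          intro hgt
          exact hpn (Finset.mem_filter.mpr ⟨ht hpt, hgt⟩)
        have h2le := hpp.two_le
        have : p = 2 := by omega
        exact this ▸ hpt
    _ = ∑ t ∈ n.primeFactors.powerset, w (∏ p ∈ t, p) := by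
        refine Finset.sum_congr rfl fun t ht => ?_
        rw [w_prod (Finset.mem_powerset.mp ht)]
    _ = ∑ t ∈ n.primeFactors.powerset, w t.val.prod := by
        refine Finset.sum_congr rfl fun t ht => ?_
        rw [hval]

lemma dvd_iff {h : ℕ} (hh : 0 < h) {d : ℕ} (hd : Squarefree d) (r : ℕ) :
    d ∣ h * r ↔ DD h d ∣ r := by
  have hg : d.gcd h ∣ d := Nat.gcd_dvd_left d h
  have hcop : (DD h d).Coprime h := by
    by_cases h1 : (DD h d).gcd h = 1
    · exact h1
    · exfalso
      obtain ⟨p, hp, hpdvd⟩ := Nat.exists_prime_and_dvd h1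
      have hp1 : p ∣ DD h d := hpdvd.trans (Nat.gcd_dvd_left _ _)
      have hp2 : p ∣ h := hpdvd.trans (Nat.gcd_dvd_right _ _)
      have hp3 : p ∣ d := hp1.trans (Nat.div_dvd_of_dvd hg)
      have hp4 : p ∣ d.gcd h := Nat.dvd_gcd hp3 hp2
      have : p * p ∣ d := by
        have := mul_dvd_mul hp4 hp1
        rwa [gcd_mul_DD] at this
      exact (Nat.squarefree_iff_prime_squarefree.mp hd p hp) this
  constructor
  · intro hdvd
    have : DD h d ∣ h * r := (Nat.div_dvd_of_dvd hg).trans hdvd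
    exact hcop.dvd_of_dvd_mul_left this
  · intro hdvd
    have : d.gcd h * DD h d ∣ h * r := mul_dvd_mul (Nat.gcd_dvd_right d h) hdvd
    rwa [gcd_mul_DD] at this


lemma S_eq (h : ℕ) (hh : 0 < h) {m : ℕ} (hm : 1 ≤ m) :
    ∑ r ∈ Icc 1 m, ∑ d ∈ (h * r).divisors, w d =
      ∑ d ∈ Icc 1 (h * m), w d * ((m / DD h d : ℕ) : ℝ) := by
  have hstep : ∀ r ∈ Icc 1 m, ∑ d ∈ (h * r).divisors, w d =
      ∑ d ∈ Icc 1 (h * m), (if d ∣ h * r then w d else 0) := by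
    intro r hr
    rw [Finset.mem_Icc] at hr
    have hhr : h * r ≠ 0 := Nat.mul_ne_zero hh.ne' (by omega)
    rw [← Finset.sum_filter]
    have hset : Finset.filter (fun d => d ∣ h * r) (Icc 1 (h * m)) = (h * r).divisors := by
      ext d
      simp only [Finset.mem_filter, Finset.mem_Icc, Nat.mem_divisors]
      constructor
      · rintro ⟨⟨h1, h2⟩, hdvd⟩
        exact ⟨hdvd, hhr⟩
      · rintro ⟨hdvd, -⟩
        have hd0 : d ≠ 0 := by
          rintro rfl
          exact hhr (Nat.eq_zero_of_zero_dvd hdvd)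
        refine ⟨⟨Nat.one_le_iff_ne_zero.mpr hd0, ?_⟩, hdvd⟩
        calc d ≤ h * r := Nat.le_of_dvd (Nat.pos_of_ne_zero hhr) hdvd
        _ ≤ h * m := Nat.mul_le_mul_left h hr.2
    rw [hset]
  rw [Finset.sum_congr rfl hstep, Finset.sum_comm]
  refine Finset.sum_congr rfl fun d hd => ?_
  by_cases hw : w d = 0
  · simp [hw]
  · have hsq := (sqf_of_w_ne hw).1
    have hcongr : ∀ r ∈ Icc 1 m, (if d ∣ h * r then w d else 0) =
        (if DD h d ∣ r then w d else 0) := fun r _ =>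
      if_congr (dvd_iff hh hsq r) rfl rfl
    rw [Finset.sum_congr rfl hcongr, ← Finset.sum_filter, Finset.sum_const,
      show (Finset.Icc 1 m) = Finset.Ioc 0 m from by rw [← Finset.Icc_add_one_left_eq_Ioc, zero_add],
      Nat.Ioc_filter_dvd_card_eq_div, nsmul_eq_mul, mul_comm]

lemma tsum_eq_S (h : ℕ) (hh : 0 < h) {m : ℕ} (hm : 1 ≤ m) :
    ∑' d : ℕ, w d * ((m / DD h d : ℕ) : ℝ) =
      ∑ r ∈ Icc 1 m, ∑ d ∈ (h * r).divisors, w d := by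
  rw [S_eq h hh hm]
  apply tsum_eq_sum
  intro d hd
  rw [Finset.mem_Icc] at hd
  push_neg at hd
  rcases Nat.eq_zero_or_pos d with rfl | hd1
  · rw [w_zero, zero_mul]
  · have hgt : h * m < d := hd hd1
    have hlt : m < DD h d := by
      by_contra hle
      push_neg at hle
      have hg : d.gcd h ≤ h := Nat.gcd_le_right (n := h) d hh
      have hid := gcd_mul_DD h d
      have : d ≤ h * m := by
        calc d = d.gcd h * DD h d := hid.symm
        _ ≤ h * m := Nat.mul_le_mul hg hle
      omega
    rw [Nat.div_eq_of_lt hlt, Nat.cast_zero, mul_zero]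

lemma tendsto_term (h : ℕ) (hh : 0 < h) (d : ℕ) :
    Tendsto (fun m : ℕ => w d * ((m / DD h d : ℕ) : ℝ) / m) atTop (𝓝 (Fw h d)) := by
  rcases Nat.eq_zero_or_pos d with rfl | hd
  · simp only [w_zero, Fw_zero, zero_mul, zero_div]
    exact tendsto_const_nhds
  have hk : 0 < DD h d := DD_pos hd
  have hk' : (0:ℝ) < (DD h d : ℝ) := by exact_mod_cast hk
  have hmod : Tendsto (fun m : ℕ => ((m % DD h d : ℕ) : ℝ) / m) atTop (𝓝 0) := by
    refine squeeze_zero (fun m => by positivity) (fun m => ?_)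
      (tendsto_const_div_atTop_nhds_zero_nat (DD h d : ℝ))
    have : ((m % DD h d : ℕ) : ℝ) ≤ (DD h d : ℝ) := by
      exact_mod_cast (Nat.mod_lt m hk).le
    exact div_le_div_of_nonneg_right this (Nat.cast_nonneg m)
  have h1 : Tendsto (fun m : ℕ => w d * ((1 - ((m % DD h d : ℕ) : ℝ) / m) / (DD h d : ℝ)))
      atTop (𝓝 (w d * ((1 - 0) / (DD h d : ℝ)))) :=
    Tendsto.const_mul (w d) ((tendsto_const_nhds.sub hmod).div_const _)
  rw [sub_zero] at h1
  have h2 : w d * (1 / (DD h d : ℝ)) = Fw h d := by rw [Fw, mul_one_div]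
  rw [h2] at h1
  refine h1.congr' ?_
  filter_upwards [eventually_ge_atTop 1] with m hm
  have hm' : (0:ℝ) < (m:ℝ) := by exact_mod_cast hm
  have hid : ((m % DD h d : ℕ) : ℝ) + (DD h d : ℝ) * ((m / DD h d : ℕ) : ℝ) = (m:ℝ) := by
    exact_mod_cast congrArg (Nat.cast : ℕ → ℝ) (Nat.mod_add_div m (DD h d))
  rw [mul_div_assoc]
  congr 1
  rw [div_eq_div_iff hk'.ne' hm'.ne']
  field_simp
  linarith

lemma term_le (h : ℕ) (hh : 0 < h) (m d : ℕ) :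
    ‖w d * ((m / DD h d : ℕ) : ℝ) / m‖ ≤ Fw h d := by
  rcases Nat.eq_zero_or_pos d with rfl | hd
  · simp [w_zero, Fw_zero]
  rcases Nat.eq_zero_or_pos m with rfl | hm
  · simp only [Nat.cast_zero, div_zero, norm_zero]
    exact Fw_nonneg h d
  have hk : 0 < DD h d := DD_pos hd
  have hk' : (0:ℝ) < (DD h d : ℝ) := by exact_mod_cast hk
  have hm' : (0:ℝ) < (m:ℝ) := by exact_mod_cast hm
  have hnn : 0 ≤ w d * ((m / DD h d : ℕ) : ℝ) / m :=
    div_nonneg (mul_nonneg (w_nonneg d) (Nat.cast_nonneg _)) hm'.le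
  rw [Real.norm_of_nonneg hnn, Fw, div_le_div_iff₀ hm' hk']
  have hXk : ((m / DD h d : ℕ) : ℝ) * (DD h d : ℝ) ≤ (m:ℝ) := by
    have := mul_le_mul_of_nonneg_right (Nat.cast_div_le (m := m) (n := DD h d) (α := ℝ)) hk'.le
    rwa [div_mul_cancel₀ _ hk'.ne'] at this
  calc w d * ((m / DD h d : ℕ) : ℝ) * (DD h d : ℝ)
      = w d * (((m / DD h d : ℕ) : ℝ) * (DD h d : ℝ)) := mul_assoc _ _ _
  _ ≤ w d * (m:ℝ) := mul_le_mul_of_nonneg_left hXk (w_nonneg d)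

end HLaux

/-- For every positive integer `h`, the subsequence `{C_{2hr}}` has mean value
`∏_{p ∣ h, p > 2} p/(p-1)`: `(1/m) ∑_{r=1}^m C_{2hr} → ∏_{p ∣ h, p > 2} p/(p-1)`. -/
theorem HLconst_subsequence_mean_value (h : ℕ) (hh : 0 < h) :
    Tendsto (fun m : ℕ => (∑ r ∈ Finset.Icc 1 m, HLconst (h * r)) / (m : ℝ)) atTop
      (𝓝 (∏ p ∈ h.primeFactors.filter (fun p => 2 < p), ((p : ℝ) / ((p : ℝ) - 1)))) := by
  classical
  have hsum := HLaux.summable_Fw h hh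
  have hT : Tendsto (fun m : ℕ => ∑' d : ℕ, HLaux.w d * ((m / HLaux.DD h d : ℕ) : ℝ) / m)
      atTop (𝓝 (∑' d, HLaux.Fw h d)) := by
    refine tendsto_tsum_of_dominated_convergence hsum (HLaux.tendsto_term h hh) ?_
    exact Filter.Eventually.of_forall fun m d => HLaux.term_le h hh m d
  have hT2 := hT.const_mul twinPrimeConst
  rw [HLaux.CL h hh] at hT2
  refine hT2.congr' ?_
  filter_upwards [eventually_ge_atTop 1] with m hm
  have e1 : ∑' d : ℕ, HLaux.w d * ((m / HLaux.DD h d : ℕ) : ℝ) / m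
      = (∑' d : ℕ, HLaux.w d * ((m / HLaux.DD h d : ℕ) : ℝ)) / m := tsum_div_const
  rw [e1, HLaux.tsum_eq_S h hh hm, ← mul_div_assoc]
  congr 1
  rw [Finset.mul_sum]
  refine Finset.sum_congr rfl fun r hr => ?_
  rw [Finset.mem_Icc] at hr
  rw [HLconst, HLaux.expand (h * r) (Nat.mul_ne_zero hh.ne' (by omega))]
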